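/- (Lemma B.4: Lipschitz continuity of the backward solution map.) Let the model data satisfy the Lipschitz assumptions, and let F⃖ : M → V be the map sending μ ∈ M to the unique regular solution of (E1) and (E3) given μ (which exists by Lemma B.2). Then F⃖ is Lipschitz continuous with respect to the supremum norms: for all μ, μ̄ ∈ M, sup_{(t,u)∈TS} ‖F⃖(μ)(t,u) − F⃖(μ̄)(t,u)‖ ≤ (L_Ψ + K1·T) · exp(K2·T) · ( Σ_{i=0}^{n} ( exp(K2·T) · λmax · T )^i ) · sup_{(t,u)∈TS} ‖μ(t,u) − μ̄(t,u)‖. -/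

import Mathlib

open MeasureTheory
open scoped BigOperators Classical

namespace MFGShocks

/-- The probability simplex `𝒫(𝕊)` in `ℝ^S`. -/
def simplex (S : ℕ) : Set (Fin S → ℝ) :=
  {m | (∀ i, 0 ≤ m i) ∧ ∑ i, m i = 1}

/-- Membership in the parameter set `𝕌`: for some `k ≤ n`, the first `k` coordinates are
increasing and lie in `[0,T]` and the remaining coordinates equal `-1`. -/
def memU (n : ℕ) (T : ℝ) (u : Fin n → ℝ) : Prop :=
  ∃ k ≤ n, (∀ i : Fin n, (i : ℕ) < k → u i ∈ Set.Icc (0 : ℝ) T) ∧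
    (∀ i j : Fin n, (j : ℕ) < k → i ≤ j → u i ≤ u j) ∧
    (∀ i : Fin n, k ≤ (i : ℕ) → u i = -1)

/-- `Z(u)`: the number of coordinates of `u` different from `-1`, i.e.\ the number of
shocks recorded in `u`. -/
noncomputable def Zu {n : ℕ} (u : Fin n → ℝ) : ℕ :=
  (Finset.univ.filter fun i => u i ≠ -1).card

/-- Membership `(t,u) ∈ TS`. -/
def memTS (n : ℕ) (T : ℝ) (t : ℝ) (u : Fin n → ℝ) : Prop :=
  memU n T u ∧ t ∈ Set.Icc (0 : ℝ) T ∧ ∀ i, u i ≤ t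

/-- `→(u,t)`: record a new shock at time `t` (replace coordinate `Z(u)+1` of `u` by `t`). -/
noncomputable def push {n : ℕ} (u : Fin n → ℝ) (t : ℝ) : Fin n → ℝ :=
  fun i => if (i : ℕ) = Zu u then t else u i

/-- `←u`: delete the last shock (replace coordinate `Z(u)` of `u` by `-1`). -/
noncomputable def pop {n : ℕ} (u : Fin n → ℝ) : Fin n → ℝ :=
  fun i => if (i : ℕ) + 1 = Zu u then -1 else u i

/-- `t_u = u^{Z(u)}`: the time of the last shock recorded in `u` (`0` if there is none). -/
noncomputable def lastTime {n : ℕ} (u : Fin n → ℝ) : ℝ :=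
  if h : Zu u - 1 < n then u ⟨Zu u - 1, h⟩ else 0

/-- The left endpoint of the time interval associated with the parameter `u`:
`t_u` if `u` records at least one shock, and `0` otherwise. -/
noncomputable def startTime {n : ℕ} (u : Fin n → ℝ) : ℝ :=
  if Zu u = 0 then 0 else lastTime u

/-- `f` is absolutely continuous on the interval `[a,b]`. -/
def AbsContOn {E : Type*} [NormedAddCommGroup E] (f : ℝ → E) (a b : ℝ) : Prop :=
  ∀ ε > (0 : ℝ), ∃ δ > (0 : ℝ), ∀ (N : ℕ) (c d : Fin N → ℝ),
    (∀ k, a ≤ c k ∧ c k ≤ d k ∧ d k ≤ b) →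
    (∀ k l, k ≠ l → Set.Ioo (c k) (d k) ∩ Set.Ioo (c l) (d l) = ∅) →
    ∑ k, (d k - c k) < δ → ∑ k, ‖f (d k) - f (c k)‖ < ε

/-- A function `f : TS → ℝ^S` is regular if `f(·,u)` is absolutely continuous on
`[max_k u^k, T]` (intersected with `[0,T]`) for every `u ∈ 𝕌`. -/
def Regular (S n : ℕ) (T : ℝ) (f : ℝ → (Fin n → ℝ) → Fin S → ℝ) : Prop :=
  ∀ u : Fin n → ℝ, memU n T u → AbsContOn (fun t => f t u) (startTime u) T

/-- The model data: reduced-form running reward `ψ̂`, reduced-form intensity matrix `Q̂`,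
shock intensities `λ`, terminal reward `Ψ`, relocation map `J` (independent of the
distribution) and initial distribution `m₀`. -/
structure Model (S n : ℕ) where
  psi : ℝ → (Fin n → ℝ) → (Fin S → ℝ) → (Fin S → ℝ) → Fin S → ℝ
  Q : ℝ → (Fin n → ℝ) → (Fin S → ℝ) → (Fin S → ℝ) → Fin S → Fin S → ℝ
  lam : ℕ → ℝ → (Fin S → ℝ) → ℝ
  Psi : ℕ → (Fin S → ℝ) → Fin S → ℝ
  J : ℝ → Fin S → Fin S
  m0 : Fin S → ℝ

/-- The standing (boundedness, measurability, intensity-matrix and Lipschitz) assumptions on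
the model data, together with the constants `Ψmax, ψmax, Qmax, λmax, Jmax` bounding the data
and the Lipschitz constants `L_ψ̂, L_Q̂, L_Ψ, L_λ`.  Throughout, `ℝ^S` carries the maximum
norm and the matrix norm is the compatible induced one (maximal absolute row sum). -/
structure Hyps (S n : ℕ) (T : ℝ) (D : Model S n)
    (Lpsi LQ LPsi Llam Psimax psimax Qmax lammax : ℝ) (Jmax : ℕ) : Prop where
  hS : 1 ≤ S
  hn : 1 ≤ n
  hT : 0 < T
  hm0 : D.m0 ∈ simplex S
  hLpsi : 0 < Lpsi
  hLQ : 0 < LQ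
  hLPsi : 0 < LPsi
  hLlam : 0 < Llam
  psi_meas : Measurable fun p : ℝ × (Fin n → ℝ) × (Fin S → ℝ) × (Fin S → ℝ) =>
    D.psi p.1 p.2.1 p.2.2.1 p.2.2.2
  Q_meas : Measurable fun p : ℝ × (Fin n → ℝ) × (Fin S → ℝ) × (Fin S → ℝ) =>
    D.Q p.1 p.2.1 p.2.2.1 p.2.2.2
  lam_meas : ∀ k, Measurable fun p : ℝ × (Fin S → ℝ) => D.lam k p.1 p.2
  Psi_meas : ∀ k, Measurable (D.Psi k)
  J_meas : Measurable D.J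
  psi_bdd : ∀ t u m v, memTS n T t u → m ∈ simplex S → ∀ i, |D.psi t u m v i| ≤ psimax
  Q_bdd : ∀ t u m v, memTS n T t u → m ∈ simplex S → ∀ i, ∑ j, |D.Q t u m v i j| ≤ Qmax
  Q_offdiag : ∀ t u m v i j, i ≠ j → 0 ≤ D.Q t u m v i j
  Q_rowsum : ∀ t u m v i, ∑ j, D.Q t u m v i j = 0
  lam_pos : ∀ k, 1 ≤ k → k ≤ n → ∀ t ∈ Set.Icc (0 : ℝ) T, ∀ m ∈ simplex S,
    0 < D.lam k t m
  lam_bdd : ∀ k, 1 ≤ k → k ≤ n → ∀ t ∈ Set.Icc (0 : ℝ) T, ∀ m ∈ simplex S,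
    D.lam k t m ≤ lammax
  Psi_bdd : ∀ k ≤ n, ∀ m ∈ simplex S, ∀ i, |D.Psi k m i| ≤ Psimax
  psi_lip : ∀ t u, memTS n T t u → ∀ m₁ ∈ simplex S, ∀ m₂ ∈ simplex S,
    ∀ v₁ v₂ : Fin S → ℝ, ∀ i,
      |D.psi t u m₁ v₁ i - D.psi t u m₂ v₂ i| ≤ Lpsi * (‖m₁ - m₂‖ + ‖v₁ - v₂‖)
  Q_lip : ∀ t u, memTS n T t u → ∀ m₁ ∈ simplex S, ∀ m₂ ∈ simplex S,
    ∀ v₁ v₂ : Fin S → ℝ, ∀ i,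
      ∑ j, |D.Q t u m₁ v₁ i j - D.Q t u m₂ v₂ i j| ≤ LQ * (‖m₁ - m₂‖ + ‖v₁ - v₂‖)
  Psi_lip : ∀ k ≤ n, ∀ m₁ ∈ simplex S, ∀ m₂ ∈ simplex S,
    ‖D.Psi k m₁ - D.Psi k m₂‖ ≤ LPsi * ‖m₁ - m₂‖
  lam_lip : ∀ k, 1 ≤ k → k ≤ n → ∀ t ∈ Set.Icc (0 : ℝ) T, ∀ m₁ ∈ simplex S, ∀ m₂ ∈ simplex S,
    |D.lam k t m₁ - D.lam k t m₂| ≤ Llam * ‖m₁ - m₂‖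
  J_bdd : ∀ t ∈ Set.Icc (0 : ℝ) T, ∀ j : Fin S,
    (Finset.univ.filter fun i => D.J t i = j).card ≤ Jmax

/-- The constant `v_max`. -/
noncomputable def vmaxC (n : ℕ) (T Psimax psimax Qmax lammax : ℝ) : ℝ :=
  (Psimax + psimax * T) * Real.exp ((Qmax + lammax) * T) *
    ∑ i ∈ Finset.range (n + 1), (Real.exp ((Qmax + lammax) * T) * lammax * T) ^ i

/-- The constant `K₁ = L_ψ̂ + L_Q̂ v_max + 2 v_max L_λ`. -/
noncomputable def K1C (n : ℕ) (T Lpsi LQ Llam Psimax psimax Qmax lammax : ℝ) : ℝ :=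
  Lpsi + LQ * vmaxC n T Psimax psimax Qmax lammax +
    2 * vmaxC n T Psimax psimax Qmax lammax * Llam

/-- The constant `K₂ = L_ψ̂ + v_max L_Q̂ + Qmax + λmax`. -/
noncomputable def K2C (n : ℕ) (T Lpsi LQ Psimax psimax Qmax lammax : ℝ) : ℝ :=
  Lpsi + vmaxC n T Psimax psimax Qmax lammax * LQ + Qmax + lammax

/-- The right-hand side of the backward equation (E1), written for the integral
(Carathéodory) formulation `v(t,u) = Ψ(Z(u),μ(T,u)) + ∫_t^T (E1rhs)(s) ds`. -/
noncomputable def E1rhs {S n : ℕ} (D : Model S n)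
    (μ v : ℝ → (Fin n → ℝ) → Fin S → ℝ) (u : Fin n → ℝ) (i : Fin S) (s : ℝ) : ℝ :=
  D.psi s u (μ s u) (v s u) i + (∑ j, D.Q s u (μ s u) (v s u) i j * v s u j) +
    (if Zu u < n then
      D.lam (Zu u + 1) s (μ s u) * (v s (push u s) (D.J s i) - v s u i)
    else 0)

/-- `v` is a (Carathéodory) solution of the backward equation (E1) with terminal
condition (E3), given the flow `μ`. -/
def SolBackward (S n : ℕ) (T : ℝ) (D : Model S n)
    (μ v : ℝ → (Fin n → ℝ) → Fin S → ℝ) : Prop :=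
  ∀ u : Fin n → ℝ, memU n T u →
    (∀ i : Fin S, v T u i = D.Psi (Zu u) (μ T u) i) ∧
    ∀ t : ℝ, memTS n T t u → ∀ i : Fin S,
      IntervalIntegrable (E1rhs D μ v u i) volume t T ∧
      v t u i = D.Psi (Zu u) (μ T u) i + ∫ s in t..T, E1rhs D μ v u i s

/-- The right-hand side of the forward equation (E2). -/
noncomputable def E2rhs {S n : ℕ} (D : Model S n)
    (v μ : ℝ → (Fin n → ℝ) → Fin S → ℝ) (u : Fin n → ℝ) (i : Fin S) (s : ℝ) : ℝ :=
  ∑ j, μ s u j * D.Q s u (μ s u) (v s u) j i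

/-- `μ` is a (Carathéodory) solution of the forward equation (E2) with initial
condition (E4) and consistency conditions (E5), given the value function `v`. -/
def SolForward (S n : ℕ) (T : ℝ) (D : Model S n)
    (v μ : ℝ → (Fin n → ℝ) → Fin S → ℝ) : Prop :=
  (∀ i, μ 0 (fun _ => (-1 : ℝ)) i = D.m0 i) ∧
  (∀ u : Fin n → ℝ, memU n T u → 1 ≤ Zu u → ∀ j : Fin S,
    μ (lastTime u) u j =
      ∑ i, if D.J (lastTime u) i = j then μ (lastTime u) (pop u) i else 0) ∧
  (∀ u : Fin n → ℝ, memU n T u → ∀ t : ℝ, memTS n T t u → ∀ i : Fin S,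
    IntervalIntegrable (E2rhs D v μ u i) volume (startTime u) t ∧
    μ t u i = μ (startTime u) u i + ∫ s in (startTime u)..t, E2rhs D v μ u i s)

/-- Membership in `M`: a `𝒫(𝕊)`-valued function on `TS` that is `Qmax`-Lipschitz in time. -/
def MemM (S n : ℕ) (T Qmax : ℝ) (μ : ℝ → (Fin n → ℝ) → Fin S → ℝ) : Prop :=
  (∀ t u, memTS n T t u → μ t u ∈ simplex S) ∧
  ∀ u : Fin n → ℝ, memU n T u → ∀ t₁ t₂ : ℝ, memTS n T t₁ u → memTS n T t₂ u →
    ‖μ t₁ u - μ t₂ u‖ ≤ Qmax * |t₁ - t₂|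

/-- Membership in `V`: a regular function on `TS` bounded by `v_max` in supremum norm. -/
def MemV (S n : ℕ) (T vmaxVal : ℝ) (v : ℝ → (Fin n → ℝ) → Fin S → ℝ) : Prop :=
  Regular S n T v ∧ ∀ t u, memTS n T t u → ‖v t u‖ ≤ vmaxVal

/-- The supremum norm over `TS` of a function `f : TS → ℝ^S`. -/
noncomputable def supTS (S n : ℕ) (T : ℝ) (f : ℝ → (Fin n → ℝ) → Fin S → ℝ) : ℝ :=
  sSup {r : ℝ | ∃ t u, memTS n T t u ∧ r = ‖f t u‖}

end MFGShocks

namespace MFGShocks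


/-! ### Auxiliary lemmas -/

open intervalIntegral in
theorem gronwall_core' {f : ℝ → ℝ} {a b K A : ℝ} (hK : 0 ≤ K)
    (hf : Continuous f)
    (h : ∀ t ∈ Set.Icc a b, f t ≤ A + ∫ s in t..b, K * f s) :
    ∀ t ∈ Set.Icc a b, f t ≤ A * Real.exp (K * (b - t)) := by
  set g : ℝ → ℝ := fun s => K * f s with hg
  have hgc : Continuous g := continuous_const.mul hf
  set F : ℝ → ℝ := fun t => ∫ s in t..b, g s with hF
  have hFd : ∀ t : ℝ, HasDerivAt F (-g t) t := fun t =>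
    integral_hasDerivAt_left (hgc.intervalIntegrable _ _)
      hgc.stronglyMeasurable.stronglyMeasurableAtFilter hgc.continuousAt
  set G : ℝ → ℝ := fun t => (A + F t) * Real.exp (K * t) with hG
  have hGd : ∀ t : ℝ, HasDerivAt G ((K * (A + F t) - g t) * Real.exp (K * t)) t := by
    intro t
    have h1 : HasDerivAt (fun t => A + F t) (-g t) t := (hFd t).const_add A
    have h2 : HasDerivAt (fun t => Real.exp (K * t)) (K * Real.exp (K * t)) t := by
      simpa [mul_comm] using ((hasDerivAt_id t).const_mul K).exp
    have := h1.mul h2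
    exact this.congr_deriv (by ring)
  have hGmono : MonotoneOn G (Set.Icc a b) := by
    have hGc : Continuous G :=
      continuous_iff_continuousAt.mpr fun t => (hGd t).differentiableAt.continuousAt
    apply monotoneOn_of_deriv_nonneg (convex_Icc a b) hGc.continuousOn
      (fun t _ => (hGd t).differentiableAt.differentiableWithinAt)
    intro t ht
    rw [interior_Icc] at ht
    rw [(hGd t).deriv]
    have hft : f t ≤ A + F t := h t (Set.mem_Icc.mpr ⟨ht.1.le, ht.2.le⟩)
    have : g t ≤ K * (A + F t) := mul_le_mul_of_nonneg_left hft hK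
    have := sub_nonneg.mpr this
    positivity
  intro t ht
  have hb : G t ≤ G b := hGmono ht (Set.mem_Icc.mpr ⟨ht.1.trans ht.2, le_rfl⟩) ht.2
  have hFb : F b = 0 := by simp [hF]
  rw [hG] at hb
  simp only [hFb, add_zero] at hb
  have hept : (0:ℝ) < Real.exp (K * t) := Real.exp_pos _
  have h2 : A + F t ≤ A * Real.exp (K * (b - t)) := by
    have h3 : A + F t ≤ A * Real.exp (K * b) / Real.exp (K * t) :=
      (le_div_iff₀ hept).mpr hb
    have h4 : A * Real.exp (K * b) / Real.exp (K * t) = A * Real.exp (K * (b - t)) := by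
      rw [mul_sub, Real.exp_sub]
      ring
    rwa [h4] at h3
  exact (h t ht).trans h2

theorem gronwall_on' {f : ℝ → ℝ} {a b K A : ℝ} (hab : a ≤ b) (hK : 0 ≤ K)
    (hf : ContinuousOn f (Set.Icc a b))
    (h : ∀ t ∈ Set.Icc a b, f t ≤ A + ∫ s in t..b, K * f s) :
    ∀ t ∈ Set.Icc a b, f t ≤ A * Real.exp (K * (b - t)) := by
  set c : ℝ → ℝ := fun x => max a (min b x) with hc
  have hcmem : ∀ x, c x ∈ Set.Icc a b := fun x =>
    ⟨le_max_left _ _, max_le hab (min_le_left _ _)⟩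
  have hceq : ∀ x ∈ Set.Icc a b, c x = x := fun x hx => by
    rw [hc]; simp only [min_eq_right hx.2, max_eq_right hx.1]
  set g : ℝ → ℝ := fun x => f (c x) with hgdef
  have hgc : Continuous g := by
    apply hf.comp_continuous (continuous_const.max (continuous_const.min continuous_id)) hcmem
  have hgeq : ∀ x ∈ Set.Icc a b, g x = f x := fun x hx => by rw [hgdef]; simp [hceq x hx]
  have key : ∀ t ∈ Set.Icc a b, g t ≤ A + ∫ s in t..b, K * g s := by
    intro t ht
    have : (∫ s in t..b, K * g s) = ∫ s in t..b, K * f s := by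
      apply intervalIntegral.integral_congr
      intro s hs
      rw [Set.uIcc_of_le ht.2] at hs
      have hs' : s ∈ Set.Icc a b := ⟨ht.1.trans hs.1, hs.2⟩
      show K * g s = K * f s
      rw [hgeq s hs']
    rw [this, hgeq t ht]
    exact h t ht
  intro t ht
  have := gronwall_core' hK hgc key t ht
  rwa [hgeq t ht] at this

theorem gronwall_apply' {f : ℝ → ℝ} {a b cc K A : ℝ} (hab : a ≤ b) (ha : 0 ≤ a) (hK : 0 ≤ K)
    (hA : 0 ≤ A) (hcc : 0 ≤ cc)
    (hf : ContinuousOn f (Set.Icc a b))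
    (h : ∀ t ∈ Set.Icc a b, f t ≤ A + ∫ s in t..b, (cc + K * f s)) :
    ∀ t ∈ Set.Icc a b, f t ≤ (A + cc * b) * Real.exp (K * b) := by
  have h' : ∀ t ∈ Set.Icc a b, f t ≤ (A + cc * b) + ∫ s in t..b, K * f s := by
    intro t ht
    have hfint : IntervalIntegrable (fun s => K * f s) volume t b := by
      apply ContinuousOn.intervalIntegrable
      rw [Set.uIcc_of_le ht.2]
      exact (continuousOn_const.mul (hf.mono (Set.Icc_subset_Icc_left ht.1)))
    have hsplit : (∫ s in t..b, (cc + K * f s)) = cc * (b - t) + ∫ s in t..b, K * f s := by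
      rw [intervalIntegral.integral_add (intervalIntegrable_const) hfint]
      simp [mul_comm]
    have := h t ht
    rw [hsplit] at this
    have h2 : cc * (b - t) ≤ cc * b := by nlinarith [ht.1]
    linarith
  intro t ht
  have := gronwall_on' hab hK hf h' t ht
  have hb0 : (0:ℝ) ≤ b := ha.trans hab
  have hA' : 0 ≤ A + cc * b := by positivity
  refine this.trans (mul_le_mul_of_nonneg_left ?_ hA')
  apply Real.exp_le_exp.mpr
  have ht0 : 0 ≤ t := ha.trans ht.1
  nlinarith

theorem AbsContOn.continuousOn' {E : Type*} [NormedAddCommGroup E] {f : ℝ → E} {a b : ℝ}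
    (h : AbsContOn f a b) : ContinuousOn f (Set.Icc a b) := by
  rw [Metric.continuousOn_iff]
  intro x hx ε hε
  obtain ⟨δ, hδ, hprop⟩ := h ε hε
  refine ⟨δ, hδ, fun y hy hxy => ?_⟩
  have key : ‖f (max x y) - f (min x y)‖ < ε := by
    have h1 := hprop 1 (fun _ => min x y) (fun _ => max x y)
      (fun _ => ⟨le_min hx.1 hy.1, ⟨min_le_max, max_le hx.2 hy.2⟩⟩)
      (fun k l hkl => absurd (Subsingleton.elim k l) hkl)
      (by
        simp only [Fin.sum_univ_one]
        rw [Real.dist_eq, abs_lt] at hxy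
        rcases le_total x y with hc | hc
        · rw [min_eq_left hc, max_eq_right hc]
          linarith [hxy.2]
        · rw [min_eq_right hc, max_eq_left hc]
          linarith [hxy.1])
    simpa using h1
  rw [dist_eq_norm]
  rcases le_total x y with hc | hc
  · rwa [min_eq_left hc, max_eq_right hc] at key
  · rw [min_eq_right hc, max_eq_left hc] at key
    rw [norm_sub_rev]
    exact key

/-! ### Structural lemmas -/

theorem Zu_le {n : ℕ} (u : Fin n → ℝ) : Zu u ≤ n := by
  unfold Zu
  exact le_trans (Finset.card_filter_le _ _) (by simp)

theorem Zu_eq_of {n k : ℕ} {T : ℝ} {u : Fin n → ℝ} (hk : k ≤ n)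
    (h1 : ∀ i : Fin n, (i : ℕ) < k → u i ∈ Set.Icc (0 : ℝ) T)
    (h3 : ∀ i : Fin n, k ≤ (i : ℕ) → u i = -1) : Zu u = k := by
  unfold Zu
  have heq : (Finset.univ.filter fun i => u i ≠ -1) =
      Finset.univ.filter fun i : Fin n => (i : ℕ) < k := by
    ext i
    simp only [Finset.mem_filter, Finset.mem_univ, true_and]
    constructor
    · intro hne
      by_contra hlt
      push_neg at hlt
      exact hne (h3 i hlt)
    · intro hlt
      have := (h1 i hlt).1
      intro he
      rw [he] at this
      linarith
  rw [heq]
  rcases Nat.eq_or_lt_of_le hk with rfl | hlt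
  · rw [Finset.filter_true_of_mem (fun i _ => i.isLt)]
    simp
  · have : (Finset.univ.filter fun i : Fin n => (i : ℕ) < k) = Finset.Iio ⟨k, hlt⟩ := by
      ext i
      simp [Finset.mem_Iio, Fin.lt_def]
    rw [this, Fin.card_Iio]

/-- The canonical decomposition of a `memU` element: its witness `k` equals `Zu u`. -/
theorem memU_spec {n : ℕ} {T : ℝ} {u : Fin n → ℝ} (h : memU n T u) :
    Zu u ≤ n ∧ (∀ i : Fin n, (i : ℕ) < Zu u → u i ∈ Set.Icc (0 : ℝ) T) ∧
    (∀ i j : Fin n, (j : ℕ) < Zu u → i ≤ j → u i ≤ u j) ∧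
    (∀ i : Fin n, Zu u ≤ (i : ℕ) → u i = -1) := by
  obtain ⟨k, hk, h1, h2, h3⟩ := h
  have hz : Zu u = k := Zu_eq_of hk h1 h3
  rw [hz]
  exact ⟨hk, h1, h2, h3⟩

theorem startTime_mem {n : ℕ} {T : ℝ} {u : Fin n → ℝ} (hT : 0 ≤ T) (h : memU n T u) :
    startTime u ∈ Set.Icc (0 : ℝ) T ∧ ∀ i, u i ≤ startTime u := by
  obtain ⟨hk, h1, h2, h3⟩ := memU_spec h
  unfold startTime
  by_cases hz : Zu u = 0
  · rw [if_pos hz]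
    refine ⟨⟨le_refl _, hT⟩, fun i => ?_⟩
    rw [h3 i (by omega)]
    linarith
  · rw [if_neg hz]
    have hz1 : 1 ≤ Zu u := Nat.one_le_iff_ne_zero.mpr hz
    have hlt : Zu u - 1 < n := by omega
    unfold lastTime
    rw [dif_pos hlt]
    have hmem : u ⟨Zu u - 1, hlt⟩ ∈ Set.Icc (0 : ℝ) T := h1 _ (by simp; omega)
    refine ⟨hmem, fun i => ?_⟩
    by_cases hi : (i : ℕ) < Zu u
    · exact h2 i ⟨Zu u - 1, hlt⟩ (by simp; omega) (by rw [Fin.le_def]; simp; omega)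
    · rw [h3 i (by omega)]
      linarith [hmem.1]

theorem memTS_iff_Icc {n : ℕ} {T : ℝ} {u : Fin n → ℝ} (hT : 0 ≤ T) (h : memU n T u) :
    ∀ t : ℝ, memTS n T t u ↔ t ∈ Set.Icc (startTime u) T := by
  obtain ⟨hst, hle⟩ := startTime_mem hT h
  intro t
  constructor
  · rintro ⟨-, ht, hut⟩
    obtain ⟨hk, h1, h2, h3⟩ := memU_spec h
    constructor
    · unfold startTime
      by_cases hz : Zu u = 0
      · rw [if_pos hz]; exact ht.1
      · rw [if_neg hz]
        unfold lastTime
        have hlt : Zu u - 1 < n := by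
          have := Zu_le u
          have hz1 : 1 ≤ Zu u := Nat.one_le_iff_ne_zero.mpr hz
          have hn : 1 ≤ n := le_trans hz1 (Zu_le u)
          omega
        rw [dif_pos hlt]
        exact hut _
    · exact ht.2
  · intro ht
    exact ⟨h, ⟨hst.1.trans ht.1, ht.2⟩, fun i => (hle i).trans ht.1⟩

theorem memTS_self_T {n : ℕ} {T : ℝ} {u : Fin n → ℝ} (hT : 0 ≤ T) (h : memU n T u) :
    memTS n T T u :=
  (memTS_iff_Icc hT h T).mpr ⟨(startTime_mem hT h).1.2, le_refl _⟩

theorem memTS_push {n : ℕ} {T t s : ℝ} {u : Fin n → ℝ} (h : memTS n T t u)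
    (hZ : Zu u < n) (hs : s ∈ Set.Icc t T) :
    memTS n T s (push u s) ∧ Zu (push u s) = Zu u + 1 := by
  obtain ⟨hU, ht, hut⟩ := h
  obtain ⟨hk, h1, h2, h3⟩ := memU_spec hU
  have hs0 : (0:ℝ) ≤ s := ht.1.trans hs.1
  have hsT : s ≤ T := hs.2
  have huts : ∀ i, u i ≤ s := fun i => (hut i).trans hs.1
  have hp1 : ∀ i : Fin n, (i : ℕ) < Zu u + 1 → push u s i ∈ Set.Icc (0 : ℝ) T := by
    intro i hi
    unfold push
    by_cases hie : (i : ℕ) = Zu u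
    · rw [if_pos hie]; exact ⟨hs0, hsT⟩
    · rw [if_neg hie]; exact h1 i (by omega)
  have hp3 : ∀ i : Fin n, Zu u + 1 ≤ (i : ℕ) → push u s i = -1 := by
    intro i hi
    unfold push
    rw [if_neg (by omega)]
    exact h3 i (by omega)
  have hp2 : ∀ i j : Fin n, (j : ℕ) < Zu u + 1 → i ≤ j → push u s i ≤ push u s j := by
    intro i j hj hij
    rw [Fin.le_def] at hij
    unfold push
    by_cases hje : (j : ℕ) = Zu u
    · rw [if_pos hje]
      by_cases hie : (i : ℕ) = Zu u
      · rw [if_pos hie]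
      · rw [if_neg hie]; exact huts i
    · rw [if_neg hje]
      have hie : (i : ℕ) ≠ Zu u := by omega
      rw [if_neg hie]
      exact h2 i j (by omega) (by rwa [Fin.le_def])
  have hUp : memU n T (push u s) := ⟨Zu u + 1, by omega, hp1, hp2, hp3⟩
  have hZp : Zu (push u s) = Zu u + 1 := Zu_eq_of (T := T) (by omega) hp1 hp3
  refine ⟨⟨hUp, ⟨hs0, hsT⟩, fun i => ?_⟩, hZp⟩
  unfold push
  by_cases hie : (i : ℕ) = Zu u
  · rw [if_pos hie]
  · rw [if_neg hie]; exact huts i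


/-! ### Norm and supTS lemmas -/

theorem simplex_norm_le_one {S : ℕ} {m : Fin S → ℝ} (hm : m ∈ simplex S) : ‖m‖ ≤ 1 := by
  apply (pi_norm_le_iff_of_nonneg zero_le_one).mpr
  intro i
  rw [Real.norm_eq_abs, abs_of_nonneg (hm.1 i)]
  calc m i ≤ ∑ j, m j := Finset.single_le_sum (fun j _ => hm.1 j) (Finset.mem_univ i)
    _ = 1 := hm.2

theorem memTS_zero {n : ℕ} {T : ℝ} (hT : 0 ≤ T) : memTS n T 0 (fun _ => (-1 : ℝ)) :=
  ⟨⟨0, Nat.zero_le n, fun i hi => absurd hi (Nat.not_lt_zero _),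
    fun i j hj => absurd hj (Nat.not_lt_zero _), fun _ _ => rfl⟩,
    ⟨le_refl _, hT⟩, fun _ => by norm_num⟩

theorem le_supTS {S n : ℕ} {T : ℝ} {f : ℝ → (Fin n → ℝ) → Fin S → ℝ} {C : ℝ}
    (hb : ∀ t u, memTS n T t u → ‖f t u‖ ≤ C) {t : ℝ} {u : Fin n → ℝ}
    (h : memTS n T t u) : ‖f t u‖ ≤ supTS S n T f := by
  apply le_csSup
  · exact ⟨C, by rintro r ⟨t', u', hm, rfl⟩; exact hb t' u' hm⟩
  · exact ⟨t, u, h, rfl⟩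

theorem supTS_le {S n : ℕ} {T : ℝ} {f : ℝ → (Fin n → ℝ) → Fin S → ℝ} {C : ℝ}
    (hC : 0 ≤ C) (h : ∀ t u, memTS n T t u → ‖f t u‖ ≤ C) : supTS S n T f ≤ C :=
  Real.sSup_le (by rintro r ⟨t', u', hm, rfl⟩; exact h t' u' hm) hC

theorem supTS_nonneg {S n : ℕ} {T : ℝ} {f : ℝ → (Fin n → ℝ) → Fin S → ℝ} {C : ℝ}
    (hT : 0 ≤ T) (hb : ∀ t u, memTS n T t u → ‖f t u‖ ≤ C) : 0 ≤ supTS S n T f :=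
  le_trans (norm_nonneg _) (le_supTS hb (memTS_zero hT))

/-! ### Nonnegativity of the constants -/

theorem consts_nonneg {S n : ℕ} {T : ℝ} {D : Model S n}
    {Lpsi LQ LPsi Llam Psimax psimax Qmax lammax : ℝ} {Jmax : ℕ}
    (H : Hyps S n T D Lpsi LQ LPsi Llam Psimax psimax Qmax lammax Jmax) :
    0 ≤ Psimax ∧ 0 ≤ psimax ∧ 0 ≤ Qmax ∧ 0 ≤ lammax := by
  have hi : Fin S := ⟨0, H.hS⟩
  have hTS0 : memTS n T 0 (fun _ => (-1 : ℝ)) := memTS_zero H.hT.le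
  refine ⟨?_, ?_, ?_, ?_⟩
  · exact le_trans (abs_nonneg _) (H.Psi_bdd 0 (Nat.zero_le n) D.m0 H.hm0 hi)
  · exact le_trans (abs_nonneg _) (H.psi_bdd 0 _ D.m0 0 hTS0 H.hm0 hi)
  · exact le_trans (Finset.sum_nonneg fun j _ => abs_nonneg _)
      (H.Q_bdd 0 _ D.m0 0 hTS0 H.hm0 hi)
  · have h1 := H.lam_pos 1 le_rfl H.hn 0 ⟨le_refl _, H.hT.le⟩ D.m0 H.hm0
    have h2 := H.lam_bdd 1 le_rfl H.hn 0 ⟨le_refl _, H.hT.le⟩ D.m0 H.hm0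
    linarith

theorem vmaxC_nonneg {n : ℕ} {T Psimax psimax Qmax lammax : ℝ}
    (h1 : 0 ≤ Psimax) (h2 : 0 ≤ psimax) (h4 : 0 ≤ lammax) (hT : 0 ≤ T) :
    0 ≤ vmaxC n T Psimax psimax Qmax lammax := by
  unfold vmaxC
  have : (0:ℝ) ≤ ∑ i ∈ Finset.range (n + 1),
      (Real.exp ((Qmax + lammax) * T) * lammax * T) ^ i :=
    Finset.sum_nonneg fun i _ => pow_nonneg (by positivity) i
  positivity

/-! ### One-level a priori bound -/

theorem E1rhs_abs_bound {S n : ℕ} {T : ℝ} {D : Model S n}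
    {Lpsi LQ LPsi Llam Psimax psimax Qmax lammax : ℝ} {Jmax : ℕ}
    (H : Hyps S n T D Lpsi LQ LPsi Llam Psimax psimax Qmax lammax Jmax)
    {μ v : ℝ → (Fin n → ℝ) → Fin S → ℝ} (hμ : MemM S n T Qmax μ)
    {u : Fin n → ℝ} {B : ℝ} (hB : 0 ≤ B)
    (hpush : Zu u < n → ∀ s, memTS n T s u → ‖v s (push u s)‖ ≤ B)
    {s : ℝ} (hs : memTS n T s u) (i : Fin S) :
    |E1rhs D μ v u i s| ≤ (psimax + lammax * B) + (Qmax + lammax) * ‖v s u‖ := by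
  obtain ⟨hPsimax, hpsimax, hQmax, hlammax⟩ := consts_nonneg H
  have hm : μ s u ∈ simplex S := hμ.1 s u hs
  have hψ : |D.psi s u (μ s u) (v s u) i| ≤ psimax := H.psi_bdd s u _ _ hs hm i
  have hQv : |∑ j, D.Q s u (μ s u) (v s u) i j * v s u j| ≤ Qmax * ‖v s u‖ := by
    calc |∑ j, D.Q s u (μ s u) (v s u) i j * v s u j|
        ≤ ∑ j, |D.Q s u (μ s u) (v s u) i j * v s u j| := Finset.abs_sum_le_sum_abs _ _
      _ ≤ ∑ j, |D.Q s u (μ s u) (v s u) i j| * ‖v s u‖ := by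
          apply Finset.sum_le_sum
          intro j _
          rw [abs_mul]
          exact mul_le_mul_of_nonneg_left
            (by simpa [Real.norm_eq_abs] using norm_le_pi_norm (v s u) j) (abs_nonneg _)
      _ = (∑ j, |D.Q s u (μ s u) (v s u) i j|) * ‖v s u‖ := by rw [Finset.sum_mul]
      _ ≤ Qmax * ‖v s u‖ :=
          mul_le_mul_of_nonneg_right (H.Q_bdd s u _ _ hs hm i) (norm_nonneg _)
  have hlamb : |if Zu u < n then
      D.lam (Zu u + 1) s (μ s u) * (v s (push u s) (D.J s i) - v s u i) else 0| ≤
      lammax * (B + ‖v s u‖) := by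
    by_cases hlt : Zu u < n
    · rw [if_pos hlt, abs_mul]
      have hlampos := H.lam_pos (Zu u + 1) (by omega) (by omega) s hs.2.1 _ hm
      have hlambd := H.lam_bdd (Zu u + 1) (by omega) (by omega) s hs.2.1 _ hm
      have h1 : |D.lam (Zu u + 1) s (μ s u)| ≤ lammax := by
        rw [abs_of_pos hlampos]; exact hlambd
      have h2 : |v s (push u s) (D.J s i) - v s u i| ≤ B + ‖v s u‖ := by
        have ha : |v s (push u s) (D.J s i)| ≤ B := by
          refine le_trans ?_ (hpush hlt s hs)
          simpa [Real.norm_eq_abs] using norm_le_pi_norm (v s (push u s)) (D.J s i)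
        have hb2 : |v s u i| ≤ ‖v s u‖ := by
          simpa [Real.norm_eq_abs] using norm_le_pi_norm (v s u) i
        calc |v s (push u s) (D.J s i) - v s u i|
            ≤ |v s (push u s) (D.J s i)| + |v s u i| := abs_sub _ _
          _ ≤ B + ‖v s u‖ := add_le_add ha hb2
      exact mul_le_mul h1 h2 (abs_nonneg _) hlammax
    · rw [if_neg hlt]
      simp only [abs_zero]
      positivity
  calc |E1rhs D μ v u i s| ≤ |D.psi s u (μ s u) (v s u) i| +
        |∑ j, D.Q s u (μ s u) (v s u) i j * v s u j| +
        |if Zu u < n then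
          D.lam (Zu u + 1) s (μ s u) * (v s (push u s) (D.J s i) - v s u i) else 0| := by
        unfold E1rhs
        exact (abs_add_le _ _).trans (add_le_add_left (abs_add_le _ _) _)
    _ ≤ psimax + Qmax * ‖v s u‖ + lammax * (B + ‖v s u‖) := by
        exact add_le_add (add_le_add hψ hQv) hlamb
    _ = (psimax + lammax * B) + (Qmax + lammax) * ‖v s u‖ := by ring

theorem level_bound {S n : ℕ} {T : ℝ} {D : Model S n}
    {Lpsi LQ LPsi Llam Psimax psimax Qmax lammax : ℝ} {Jmax : ℕ}
    (H : Hyps S n T D Lpsi LQ LPsi Llam Psimax psimax Qmax lammax Jmax)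
    {μ v : ℝ → (Fin n → ℝ) → Fin S → ℝ} (hμ : MemM S n T Qmax μ)
    (hvreg : Regular S n T v) (hv : SolBackward S n T D μ v)
    {u : Fin n → ℝ} (hU : memU n T u) {B : ℝ} (hB : 0 ≤ B)
    (hpush : Zu u < n → ∀ s, memTS n T s u → ‖v s (push u s)‖ ≤ B) :
    ∀ t, memTS n T t u →
      ‖v t u‖ ≤ (Psimax + (psimax + lammax * B) * T) * Real.exp ((Qmax + lammax) * T) := by
  obtain ⟨hPsimax, hpsimax, hQmax, hlammax⟩ := consts_nonneg H
  have hT0 : (0:ℝ) ≤ T := H.hT.le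
  obtain ⟨hstIcc, -⟩ := startTime_mem hT0 hU
  have hiff := memTS_iff_Icc hT0 hU
  set a := startTime u with ha
  have hfc : ContinuousOn (fun t => ‖v t u‖) (Set.Icc a T) :=
    ((hvreg u hU).continuousOn').norm
  have key : ∀ t ∈ Set.Icc a T, ‖v t u‖ ≤ Psimax +
      ∫ s in t..T, ((psimax + lammax * B) + (Qmax + lammax) * ‖v s u‖) := by
    intro t ht
    have hmem : memTS n T t u := (hiff t).mpr ht
    have htT : t ≤ T := ht.2
    have hbint : IntervalIntegrable
        (fun s => (psimax + lammax * B) + (Qmax + lammax) * ‖v s u‖) volume t T := by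
      apply ContinuousOn.intervalIntegrable
      rw [Set.uIcc_of_le htT]
      exact continuousOn_const.add (continuousOn_const.mul
        (hfc.mono (Set.Icc_subset_Icc_left ht.1)))
    have hRHS : 0 ≤ Psimax +
        ∫ s in t..T, ((psimax + lammax * B) + (Qmax + lammax) * ‖v s u‖) := by
      have : 0 ≤ ∫ s in t..T, ((psimax + lammax * B) + (Qmax + lammax) * ‖v s u‖) := by
        apply intervalIntegral.integral_nonneg htT
        intro s _
        positivity
      linarith
    apply (pi_norm_le_iff_of_nonneg hRHS).mpr
    intro i
    obtain ⟨hint, heq⟩ := (hv u hU).2 t hmem i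
    rw [Real.norm_eq_abs, heq]
    have hPsiB : |D.Psi (Zu u) (μ T u) i| ≤ Psimax :=
      H.Psi_bdd (Zu u) (Zu_le u) _ (hμ.1 T u (memTS_self_T hT0 hU)) i
    have hIb : |∫ s in t..T, E1rhs D μ v u i s| ≤
        ∫ s in t..T, ((psimax + lammax * B) + (Qmax + lammax) * ‖v s u‖) := by
      refine le_trans (intervalIntegral.abs_integral_le_integral_abs htT) ?_
      apply intervalIntegral.integral_mono_on htT hint.abs hbint
      intro s hsIcc
      have hsmem : memTS n T s u := (hiff s).mpr ⟨ht.1.trans hsIcc.1, hsIcc.2⟩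
      exact E1rhs_abs_bound H hμ hB hpush hsmem i
    calc |D.Psi (Zu u) (μ T u) i + ∫ s in t..T, E1rhs D μ v u i s|
        ≤ |D.Psi (Zu u) (μ T u) i| + |∫ s in t..T, E1rhs D μ v u i s| := abs_add_le _ _
      _ ≤ Psimax + ∫ s in t..T, ((psimax + lammax * B) + (Qmax + lammax) * ‖v s u‖) :=
          add_le_add hPsiB hIb
  intro t hmem
  have ht : t ∈ Set.Icc a T := (hiff t).mp hmem
  exact gronwall_apply' hstIcc.2 hstIcc.1 (by positivity) hPsimax (by positivity) hfc key t ht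

/-! ### A priori bound on the value function -/

theorem apriori_bound {S n : ℕ} {T : ℝ} {D : Model S n}
    {Lpsi LQ LPsi Llam Psimax psimax Qmax lammax : ℝ} {Jmax : ℕ}
    (H : Hyps S n T D Lpsi LQ LPsi Llam Psimax psimax Qmax lammax Jmax)
    {μ v : ℝ → (Fin n → ℝ) → Fin S → ℝ} (hμ : MemM S n T Qmax μ)
    (hvreg : Regular S n T v) (hv : SolBackward S n T D μ v) :
    ∀ t u, memTS n T t u → ‖v t u‖ ≤ vmaxC n T Psimax psimax Qmax lammax := by
  obtain ⟨hPsimax, hpsimax, hQmax, hlammax⟩ := consts_nonneg H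
  have hT0 : (0:ℝ) ≤ T := H.hT.le
  set e := Real.exp ((Qmax + lammax) * T) with he
  have he0 : 0 < e := Real.exp_pos _
  set r := e * lammax * T with hr
  have hr0 : 0 ≤ r := by positivity
  set A0 := Psimax + psimax * T with hA0
  have hA00 : 0 ≤ A0 := by positivity
  set EB : ℕ → ℝ := fun j => A0 * e * ∑ i ∈ Finset.range (j + 1), r ^ i with hEB
  have hEB0 : ∀ j, 0 ≤ EB j := by
    intro j
    have : (0:ℝ) ≤ ∑ i ∈ Finset.range (j + 1), r ^ i :=
      Finset.sum_nonneg fun i _ => pow_nonneg hr0 i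
    positivity
  have hEBmono : ∀ j j', j ≤ j' → EB j ≤ EB j' := by
    intro j j' hj
    rw [hEB]
    apply mul_le_mul_of_nonneg_left _ (by positivity)
    apply Finset.sum_le_sum_of_subset_of_nonneg
      (Finset.range_subset_range.mpr (by omega))
      (fun i _ _ => pow_nonneg hr0 i)
  have key : ∀ j : ℕ, ∀ t u, memTS n T t u → n ≤ Zu u + j → ‖v t u‖ ≤ EB j := by
    intro j
    induction j with
    | zero =>
      intro t u hmem hZ
      have hZn : Zu u = n := le_antisymm (Zu_le u) (by omega)
      have := level_bound H hμ hvreg hv hmem.1 (le_refl (0:ℝ))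
        (fun h => absurd h (by omega)) t hmem
      refine this.trans (le_of_eq ?_)
      show (Psimax + (psimax + lammax * 0) * T) * e = EB 0
      rw [hEB]
      simp only
      rw [Finset.sum_range_one]
      ring
    | succ j ih =>
      intro t u hmem hZ
      have hstep := level_bound H hμ hvreg hv hmem.1 (hEB0 j)
        (fun hlt s hs => by
          obtain ⟨hsp, hzp⟩ := memTS_push hs hlt ⟨le_refl s, hs.2.1.2⟩
          exact ih s (push u s) hsp (by omega)) t hmem
      refine hstep.trans (le_of_eq ?_)
      show (Psimax + (psimax + lammax * EB j) * T) * e = EB (j + 1)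
      rw [hEB]
      simp only
      conv_rhs => rw [geom_sum_succ]
      rw [hA0]
      ring
  intro t u hmem
  have := key n t u hmem (by omega)
  refine this.trans (le_of_eq ?_)
  rw [hEB]
  simp only
  unfold vmaxC
  rw [hr, hA0, he]

/-! ### Difference estimates -/

theorem E1rhs_diff_bound {S n : ℕ} {T : ℝ} {D : Model S n}
    {Lpsi LQ LPsi Llam Psimax psimax Qmax lammax : ℝ} {Jmax : ℕ}
    (H : Hyps S n T D Lpsi LQ LPsi Llam Psimax psimax Qmax lammax Jmax)
    {μ μ' v v' : ℝ → (Fin n → ℝ) → Fin S → ℝ}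
    (hμ : MemM S n T Qmax μ) (hμ' : MemM S n T Qmax μ')
    (hvb : ∀ t u, memTS n T t u → ‖v t u‖ ≤ vmaxC n T Psimax psimax Qmax lammax)
    (hv'b : ∀ t u, memTS n T t u → ‖v' t u‖ ≤ vmaxC n T Psimax psimax Qmax lammax)
    {δ : ℝ} (hδ0 : 0 ≤ δ) (hδ : ∀ t u, memTS n T t u → ‖μ t u - μ' t u‖ ≤ δ)
    {u : Fin n → ℝ} {B : ℝ} (hB : 0 ≤ B)
    (hpushd : Zu u < n → ∀ s, memTS n T s u →
      ‖v s (push u s) - v' s (push u s)‖ ≤ B * δ)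
    {s : ℝ} (hs : memTS n T s u) (i : Fin S) :
    |E1rhs D μ v u i s - E1rhs D μ' v' u i s| ≤
      (K1C n T Lpsi LQ Llam Psimax psimax Qmax lammax + lammax * B) * δ +
        K2C n T Lpsi LQ Psimax psimax Qmax lammax * ‖v s u - v' s u‖ := by
  obtain ⟨hPsimax, hpsimax, hQmax, hlammax⟩ := consts_nonneg H
  set VM := vmaxC n T Psimax psimax Qmax lammax with hVM
  have hVM0 : 0 ≤ VM := vmaxC_nonneg hPsimax hpsimax hlammax H.hT.le
  have hm : μ s u ∈ simplex S := hμ.1 s u hs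
  have hm' : μ' s u ∈ simplex S := hμ'.1 s u hs
  set m := μ s u
  set m' := μ' s u
  set w := v s u
  set w' := v' s u
  have hdm : ‖m - m'‖ ≤ δ := hδ s u hs
  set dw := ‖w - w'‖ with hdw
  have hdw0 : 0 ≤ dw := norm_nonneg _
  have habs : ∀ j, |w j - w' j| ≤ dw := fun j => by
    simpa [Real.norm_eq_abs] using norm_le_pi_norm (w - w') j
  have hw'j : ∀ j, |w' j| ≤ VM := fun j => by
    refine le_trans ?_ (hv'b s u hs)
    simpa [Real.norm_eq_abs] using norm_le_pi_norm w' j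
  -- psi difference
  have hψd : |D.psi s u m w i - D.psi s u m' w' i| ≤ Lpsi * (δ + dw) := by
    refine le_trans (H.psi_lip s u hs m hm m' hm' w w' i) ?_
    have := H.hLpsi
    nlinarith [hdm, hdw0]
  -- Q difference
  have hQd : |(∑ j, D.Q s u m w i j * w j) - ∑ j, D.Q s u m' w' i j * w' j| ≤
      Qmax * dw + LQ * (δ + dw) * VM := by
    have heq : (∑ j, D.Q s u m w i j * w j) - ∑ j, D.Q s u m' w' i j * w' j =
        (∑ j, D.Q s u m w i j * (w j - w' j)) +
          ∑ j, (D.Q s u m w i j - D.Q s u m' w' i j) * w' j := by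
      rw [← Finset.sum_add_distrib, ← Finset.sum_sub_distrib]
      congr 1
      funext j
      ring
    rw [heq]
    have h1 : |∑ j, D.Q s u m w i j * (w j - w' j)| ≤ Qmax * dw := by
      calc |∑ j, D.Q s u m w i j * (w j - w' j)|
          ≤ ∑ j, |D.Q s u m w i j * (w j - w' j)| := Finset.abs_sum_le_sum_abs _ _
        _ ≤ ∑ j, |D.Q s u m w i j| * dw := by
            apply Finset.sum_le_sum
            intro j _
            rw [abs_mul]
            exact mul_le_mul_of_nonneg_left (habs j) (abs_nonneg _)
        _ = (∑ j, |D.Q s u m w i j|) * dw := by rw [Finset.sum_mul]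
        _ ≤ Qmax * dw := mul_le_mul_of_nonneg_right (H.Q_bdd s u m w hs hm i) hdw0
    have h2 : |∑ j, (D.Q s u m w i j - D.Q s u m' w' i j) * w' j| ≤ LQ * (δ + dw) * VM := by
      calc |∑ j, (D.Q s u m w i j - D.Q s u m' w' i j) * w' j|
          ≤ ∑ j, |(D.Q s u m w i j - D.Q s u m' w' i j) * w' j| :=
            Finset.abs_sum_le_sum_abs _ _
        _ ≤ ∑ j, |D.Q s u m w i j - D.Q s u m' w' i j| * VM := by
            apply Finset.sum_le_sum
            intro j _
            rw [abs_mul]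
            exact mul_le_mul_of_nonneg_left (hw'j j) (abs_nonneg _)
        _ = (∑ j, |D.Q s u m w i j - D.Q s u m' w' i j|) * VM := by rw [Finset.sum_mul]
        _ ≤ (LQ * (‖m - m'‖ + ‖w - w'‖)) * VM :=
            mul_le_mul_of_nonneg_right (H.Q_lip s u hs m hm m' hm' w w' i) hVM0
        _ ≤ LQ * (δ + dw) * VM := by
            apply mul_le_mul_of_nonneg_right _ hVM0
            have := H.hLQ
            nlinarith [hdm]
    calc |(∑ j, D.Q s u m w i j * (w j - w' j)) +
          ∑ j, (D.Q s u m w i j - D.Q s u m' w' i j) * w' j|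
        ≤ |∑ j, D.Q s u m w i j * (w j - w' j)| +
          |∑ j, (D.Q s u m w i j - D.Q s u m' w' i j) * w' j| := abs_add_le _ _
      _ ≤ Qmax * dw + LQ * (δ + dw) * VM := add_le_add h1 h2
  -- lambda difference
  have hLd : |(if Zu u < n then
        D.lam (Zu u + 1) s m * (v s (push u s) (D.J s i) - w i) else 0) -
      (if Zu u < n then
        D.lam (Zu u + 1) s m' * (v' s (push u s) (D.J s i) - w' i) else 0)| ≤
      lammax * (B * δ + dw) + Llam * δ * (2 * VM) := by
    by_cases hlt : Zu u < n
    · rw [if_pos hlt, if_pos hlt]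
      set p := v s (push u s) (D.J s i)
      set p' := v' s (push u s) (D.J s i)
      have hmemp : memTS n T s (push u s) :=
        (memTS_push hs hlt ⟨le_refl s, hs.2.1.2⟩).1
      have hpp' : |p - p'| ≤ B * δ := by
        refine le_trans ?_ (hpushd hlt s hs)
        simpa [Real.norm_eq_abs] using
          norm_le_pi_norm (v s (push u s) - v' s (push u s)) (D.J s i)
      have hp' : |p'| ≤ VM := by
        refine le_trans ?_ (hv'b s (push u s) hmemp)
        simpa [Real.norm_eq_abs] using norm_le_pi_norm (v' s (push u s)) (D.J s i)
      have hw'i : |w' i| ≤ VM := hw'j i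
      have hwi : |w i - w' i| ≤ dw := habs i
      have hlampos := H.lam_pos (Zu u + 1) (by omega) (by omega) s hs.2.1 m hm
      have hlambd := H.lam_bdd (Zu u + 1) (by omega) (by omega) s hs.2.1 m hm
      have hlamlip := H.lam_lip (Zu u + 1) (by omega) (by omega) s hs.2.1 m hm m' hm'
      have hdec : D.lam (Zu u + 1) s m * (p - w i) - D.lam (Zu u + 1) s m' * (p' - w' i) =
          D.lam (Zu u + 1) s m * ((p - p') - (w i - w' i)) +
            (D.lam (Zu u + 1) s m - D.lam (Zu u + 1) s m') * (p' - w' i) := by ring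
      rw [hdec]
      have t1 : |D.lam (Zu u + 1) s m * ((p - p') - (w i - w' i))| ≤
          lammax * (B * δ + dw) := by
        rw [abs_mul]
        apply mul_le_mul (by rw [abs_of_pos hlampos]; exact hlambd) _ (abs_nonneg _) hlammax
        calc |(p - p') - (w i - w' i)| ≤ |p - p'| + |w i - w' i| := abs_sub _ _
          _ ≤ B * δ + dw := add_le_add hpp' hwi
      have t2 : |(D.lam (Zu u + 1) s m - D.lam (Zu u + 1) s m') * (p' - w' i)| ≤
          Llam * δ * (2 * VM) := by
        rw [abs_mul]
        have hlam2 : |D.lam (Zu u + 1) s m - D.lam (Zu u + 1) s m'| ≤ Llam * δ := by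
          refine hlamlip.trans ?_
          have := H.hLlam
          nlinarith [hdm]
        apply mul_le_mul hlam2 _ (abs_nonneg _) (mul_nonneg H.hLlam.le hδ0)
        calc |p' - w' i| ≤ |p'| + |w' i| := abs_sub _ _
          _ ≤ VM + VM := add_le_add hp' hw'i
          _ = 2 * VM := by ring
      exact le_trans (abs_add_le _ _) (add_le_add t1 t2)
    · rw [if_neg hlt, if_neg hlt]
      simp only [sub_zero, abs_zero]
      have := H.hLlam
      positivity
  have hfinal : |E1rhs D μ v u i s - E1rhs D μ' v' u i s| ≤
      Lpsi * (δ + dw) + (Qmax * dw + LQ * (δ + dw) * VM) +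
        (lammax * (B * δ + dw) + Llam * δ * (2 * VM)) := by
    have hdec : E1rhs D μ v u i s - E1rhs D μ' v' u i s =
        (D.psi s u m w i - D.psi s u m' w' i) +
          ((∑ j, D.Q s u m w i j * w j) - ∑ j, D.Q s u m' w' i j * w' j) +
          ((if Zu u < n then
            D.lam (Zu u + 1) s m * (v s (push u s) (D.J s i) - w i) else 0) -
          (if Zu u < n then
            D.lam (Zu u + 1) s m' * (v' s (push u s) (D.J s i) - w' i) else 0)) := by
      unfold E1rhs
      ring
    rw [hdec]
    exact le_trans (abs_add_le _ _)
      (add_le_add (le_trans (abs_add_le _ _) (add_le_add hψd hQd)) hLd)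
  refine hfinal.trans (le_of_eq ?_)
  unfold K1C K2C
  rw [← hVM]
  ring

theorem level_diff {S n : ℕ} {T : ℝ} {D : Model S n}
    {Lpsi LQ LPsi Llam Psimax psimax Qmax lammax : ℝ} {Jmax : ℕ}
    (H : Hyps S n T D Lpsi LQ LPsi Llam Psimax psimax Qmax lammax Jmax)
    {μ μ' v v' : ℝ → (Fin n → ℝ) → Fin S → ℝ}
    (hμ : MemM S n T Qmax μ) (hμ' : MemM S n T Qmax μ')
    (hvreg : Regular S n T v) (hv : SolBackward S n T D μ v)
    (hv'reg : Regular S n T v') (hv' : SolBackward S n T D μ' v')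
    (hvb : ∀ t u, memTS n T t u → ‖v t u‖ ≤ vmaxC n T Psimax psimax Qmax lammax)
    (hv'b : ∀ t u, memTS n T t u → ‖v' t u‖ ≤ vmaxC n T Psimax psimax Qmax lammax)
    {δ : ℝ} (hδ0 : 0 ≤ δ) (hδ : ∀ t u, memTS n T t u → ‖μ t u - μ' t u‖ ≤ δ)
    {u : Fin n → ℝ} (hU : memU n T u) {B : ℝ} (hB : 0 ≤ B)
    (hpushd : Zu u < n → ∀ s, memTS n T s u →
      ‖v s (push u s) - v' s (push u s)‖ ≤ B * δ) :
    ∀ t, memTS n T t u → ‖v t u - v' t u‖ ≤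
      (LPsi * δ + ((K1C n T Lpsi LQ Llam Psimax psimax Qmax lammax + lammax * B) * δ) * T) *
        Real.exp (K2C n T Lpsi LQ Psimax psimax Qmax lammax * T) := by
  obtain ⟨hPsimax, hpsimax, hQmax, hlammax⟩ := consts_nonneg H
  have hT0 : (0:ℝ) ≤ T := H.hT.le
  have hVM0 : 0 ≤ vmaxC n T Psimax psimax Qmax lammax :=
    vmaxC_nonneg hPsimax hpsimax hlammax hT0
  set K1 := K1C n T Lpsi LQ Llam Psimax psimax Qmax lammax with hK1
  set K2 := K2C n T Lpsi LQ Psimax psimax Qmax lammax with hK2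
  have hK10 : 0 ≤ K1 := by
    rw [hK1]; unfold K1C
    have := H.hLpsi
    have := H.hLQ
    have := H.hLlam
    positivity
  have hK20 : 0 ≤ K2 := by
    rw [hK2]; unfold K2C
    have := H.hLpsi
    have := H.hLQ
    positivity
  obtain ⟨hstIcc, -⟩ := startTime_mem hT0 hU
  have hiff := memTS_iff_Icc hT0 hU
  set a := startTime u with ha
  have hfc : ContinuousOn (fun t => ‖v t u - v' t u‖) (Set.Icc a T) :=
    (((hvreg u hU).continuousOn').sub ((hv'reg u hU).continuousOn')).norm
  set cc := (K1 + lammax * B) * δ with hcc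
  have hcc0 : 0 ≤ cc := by rw [hcc]; positivity
  have key : ∀ t ∈ Set.Icc a T, ‖v t u - v' t u‖ ≤ LPsi * δ +
      ∫ s in t..T, (cc + K2 * ‖v s u - v' s u‖) := by
    intro t ht
    have hmem : memTS n T t u := (hiff t).mpr ht
    have htT : t ≤ T := ht.2
    have hbint : IntervalIntegrable
        (fun s => cc + K2 * ‖v s u - v' s u‖) volume t T := by
      apply ContinuousOn.intervalIntegrable
      rw [Set.uIcc_of_le htT]
      exact continuousOn_const.add (continuousOn_const.mul
        (hfc.mono (Set.Icc_subset_Icc_left ht.1)))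
    have hRHS : 0 ≤ LPsi * δ + ∫ s in t..T, (cc + K2 * ‖v s u - v' s u‖) := by
      have h1 : 0 ≤ ∫ s in t..T, (cc + K2 * ‖v s u - v' s u‖) := by
        apply intervalIntegral.integral_nonneg htT
        intro s _
        positivity
      have := H.hLPsi
      nlinarith
    apply (pi_norm_le_iff_of_nonneg hRHS).mpr
    intro i
    obtain ⟨hint, heq⟩ := (hv u hU).2 t hmem i
    obtain ⟨hint', heq'⟩ := (hv' u hU).2 t hmem i
    have hval : (v t u - v' t u) i =
        (D.Psi (Zu u) (μ T u) i - D.Psi (Zu u) (μ' T u) i) +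
          ∫ s in t..T, (E1rhs D μ v u i s - E1rhs D μ' v' u i s) := by
      rw [intervalIntegral.integral_sub hint hint']
      simp only [Pi.sub_apply]
      rw [heq, heq']
      ring
    rw [Real.norm_eq_abs, hval]
    have hTmem : memTS n T T u := memTS_self_T hT0 hU
    have hPsid : |D.Psi (Zu u) (μ T u) i - D.Psi (Zu u) (μ' T u) i| ≤ LPsi * δ := by
      have h1 : |(D.Psi (Zu u) (μ T u) - D.Psi (Zu u) (μ' T u)) i| ≤
          ‖D.Psi (Zu u) (μ T u) - D.Psi (Zu u) (μ' T u)‖ := by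
        simpa [Real.norm_eq_abs] using
          norm_le_pi_norm (D.Psi (Zu u) (μ T u) - D.Psi (Zu u) (μ' T u)) i
      simp only [Pi.sub_apply] at h1
      refine h1.trans ?_
      refine (H.Psi_lip (Zu u) (Zu_le u) _ (hμ.1 T u hTmem) _ (hμ'.1 T u hTmem)).trans ?_
      have := H.hLPsi
      nlinarith [hδ T u hTmem]
    have hIb : |∫ s in t..T, (E1rhs D μ v u i s - E1rhs D μ' v' u i s)| ≤
        ∫ s in t..T, (cc + K2 * ‖v s u - v' s u‖) := by
      refine le_trans (intervalIntegral.abs_integral_le_integral_abs htT) ?_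
      apply intervalIntegral.integral_mono_on htT (hint.sub hint').abs hbint
      intro s hsIcc
      have hsmem : memTS n T s u := (hiff s).mpr ⟨ht.1.trans hsIcc.1, hsIcc.2⟩
      have := E1rhs_diff_bound H hμ hμ' hvb hv'b hδ0 hδ hB hpushd hsmem i
      rw [hcc, hK2, hK1]
      linarith
    calc |(D.Psi (Zu u) (μ T u) i - D.Psi (Zu u) (μ' T u) i) +
          ∫ s in t..T, (E1rhs D μ v u i s - E1rhs D μ' v' u i s)|
        ≤ |D.Psi (Zu u) (μ T u) i - D.Psi (Zu u) (μ' T u) i| +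
          |∫ s in t..T, (E1rhs D μ v u i s - E1rhs D μ' v' u i s)| := abs_add_le _ _
      _ ≤ LPsi * δ + ∫ s in t..T, (cc + K2 * ‖v s u - v' s u‖) := add_le_add hPsid hIb
  intro t hmem
  have ht : t ∈ Set.Icc a T := (hiff t).mp hmem
  have := gronwall_apply' hstIcc.2 hstIcc.1 hK20
    (by have := H.hLPsi; positivity) hcc0 hfc key t ht
  exact this
/-- **Lemma B.4** (Lipschitz continuity of the backward solution map `F⃖ : M → V`).
If `μ, μ̄ ∈ M` and `v, v̄` are the (unique) regular solutions of (E1), (E3) given `μ`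
and `μ̄` respectively, then
`sup_{TS} ‖v − v̄‖ ≤ (L_Ψ + K₁T) e^{K₂T} (Σ_{i=0}^{n} (e^{K₂T} λmax T)^i) sup_{TS} ‖μ − μ̄‖`. -/
theorem backward_solution_map_lipschitz (S n : ℕ) (T : ℝ) (D : Model S n)
    (Lpsi LQ LPsi Llam Psimax psimax Qmax lammax : ℝ) (Jmax : ℕ)
    (H : Hyps S n T D Lpsi LQ LPsi Llam Psimax psimax Qmax lammax Jmax)
    (μ μ' : ℝ → (Fin n → ℝ) → Fin S → ℝ)
    (hμ : MemM S n T Qmax μ) (hμ' : MemM S n T Qmax μ')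
    (v v' : ℝ → (Fin n → ℝ) → Fin S → ℝ)
    (hvreg : Regular S n T v) (hv : SolBackward S n T D μ v)
    (hv'reg : Regular S n T v') (hv' : SolBackward S n T D μ' v') :
    supTS S n T (fun t u => v t u - v' t u) ≤
      (LPsi + K1C n T Lpsi LQ Llam Psimax psimax Qmax lammax * T) *
        Real.exp (K2C n T Lpsi LQ Psimax psimax Qmax lammax * T) *
        (∑ i ∈ Finset.range (n + 1),
          (Real.exp (K2C n T Lpsi LQ Psimax psimax Qmax lammax * T) * lammax * T) ^ i) *
        supTS S n T (fun t u => μ t u - μ' t u) := by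
  obtain ⟨hPsimax, hpsimax, hQmax, hlammax⟩ := consts_nonneg H
  have hT0 : (0:ℝ) ≤ T := H.hT.le
  -- the sup distance between μ and μ'
  set δ := supTS S n T (fun t u => μ t u - μ' t u) with hδdef
  have hμbd : ∀ t u, memTS n T t u → ‖μ t u - μ' t u‖ ≤ 2 := by
    intro t u hm
    calc ‖μ t u - μ' t u‖ ≤ ‖μ t u‖ + ‖μ' t u‖ := norm_sub_le _ _
      _ ≤ 1 + 1 := add_le_add (simplex_norm_le_one (hμ.1 t u hm))
          (simplex_norm_le_one (hμ'.1 t u hm))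
      _ = 2 := by norm_num
  have hδ : ∀ t u, memTS n T t u → ‖μ t u - μ' t u‖ ≤ δ := by
    intro t u hm
    exact le_supTS hμbd hm
  have hδ0 : 0 ≤ δ := supTS_nonneg hT0 hμbd
  -- a priori bounds on v, v'
  have hvb := apriori_bound H hμ hvreg hv
  have hv'b := apriori_bound H hμ' hv'reg hv'
  -- constants
  set K1 := K1C n T Lpsi LQ Llam Psimax psimax Qmax lammax with hK1
  set K2 := K2C n T Lpsi LQ Psimax psimax Qmax lammax with hK2
  have hK10 : 0 ≤ K1 := by
    rw [hK1]; unfold K1C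
    have := H.hLpsi
    have := H.hLQ
    have := H.hLlam
    have := vmaxC_nonneg (n := n) (Qmax := Qmax) hPsimax hpsimax hlammax hT0
    positivity
  set e2 := Real.exp (K2 * T) with he2
  have he20 : 0 < e2 := Real.exp_pos _
  set r2 := e2 * lammax * T with hr2
  have hr20 : 0 ≤ r2 := by positivity
  set A1 := LPsi + K1 * T with hA1
  have hA10 : 0 ≤ A1 := by
    rw [hA1]
    have := H.hLPsi
    positivity
  set DB : ℕ → ℝ := fun j => A1 * e2 * ∑ i ∈ Finset.range (j + 1), r2 ^ i with hDB
  have hDB0 : ∀ j, 0 ≤ DB j := by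
    intro j
    have : (0:ℝ) ≤ ∑ i ∈ Finset.range (j + 1), r2 ^ i :=
      Finset.sum_nonneg fun i _ => pow_nonneg hr20 i
    positivity
  have key : ∀ j : ℕ, ∀ t u, memTS n T t u → n ≤ Zu u + j →
      ‖v t u - v' t u‖ ≤ DB j * δ := by
    intro j
    induction j with
    | zero =>
      intro t u hmem hZ
      have := level_diff H hμ hμ' hvreg hv hv'reg hv' hvb hv'b hδ0 hδ hmem.1
        (le_refl (0:ℝ)) (fun h => absurd h (by omega)) t hmem
      refine this.trans (le_of_eq ?_)
      show (LPsi * δ + ((K1 + lammax * 0) * δ) * T) * e2 = DB 0 * δ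
      rw [hDB]
      simp only
      rw [Finset.sum_range_one, hA1]
      ring
    | succ j ih =>
      intro t u hmem hZ
      have hstep := level_diff H hμ hμ' hvreg hv hv'reg hv' hvb hv'b hδ0 hδ hmem.1
        (hDB0 j)
        (fun hlt s hs => by
          obtain ⟨hsp, hzp⟩ := memTS_push hs hlt ⟨le_refl s, hs.2.1.2⟩
          exact ih s (push u s) hsp (by omega)) t hmem
      refine hstep.trans (le_of_eq ?_)
      show (LPsi * δ + ((K1 + lammax * DB j) * δ) * T) * e2 = DB (j + 1) * δ
      rw [hDB]
      simp only
      conv_rhs => rw [geom_sum_succ]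
      rw [hA1]
      ring
  have hfinal : ∀ t u, memTS n T t u → ‖v t u - v' t u‖ ≤ DB n * δ := by
    intro t u hmem
    exact key n t u hmem (by omega)
  have hgoal : supTS S n T (fun t u => v t u - v' t u) ≤ DB n * δ := by
    apply supTS_le (mul_nonneg (hDB0 n) hδ0)
    intro t u hmem
    exact hfinal t u hmem
  refine hgoal.trans (le_of_eq ?_)
  rw [hDB]

end MFGShocks
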